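/- arXiv:1702.02047 — 2 statements merged into one kernel-verified Lean document; each statement's English description precedes it below -/
import Mathlib

section
/- PBTD and PBTD⁺ are monotonic: for concept classes 𝓛′ ⊆ 𝓛 over the same universe X, PBTD(𝓛′) ≤ PBTD(𝓛) and PBTD⁺(𝓛′) ≤ PBTD⁺(𝓛). -/
namespace PBT

variable {X : Type*}

/-- A set `L ⊆ X` is consistent with a set `T` of labeled examples
(label `true` = “+”, label `false` = “−”). -/
def Consistent (L : Set X) (T : Set (X × Bool)) : Prop :=
  ∀ p ∈ T, (p.2 = true → p.1 ∈ L) ∧ (p.2 = false → p.1 ∉ L)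

/-- `T` is a teaching set for `L` w.r.t. the concept class `𝓛`:
`L` is the only concept in `𝓛` that is consistent with `T`. -/
def IsTeachingSet (𝓛 : Set (Set X)) (L : Set X) (T : Set (X × Bool)) : Prop :=
  Consistent L T ∧ ∀ L' ∈ 𝓛, Consistent L' T → L' = L

/-- `TD L 𝓛`: least size of a finite teaching set for `L` w.r.t. `𝓛` (`⊤` if none exists). -/
noncomputable def TD (L : Set X) (𝓛 : Set (Set X)) : ℕ∞ :=
  sInf {n : ℕ∞ | ∃ T : Finset (X × Bool), IsTeachingSet 𝓛 L ↑T ∧ n = T.card}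

/-- A positive teaching set, identified with its set of (positively labeled) points. -/
def IsPosTeachingSet (𝓛 : Set (Set X)) (L : Set X) (S : Set X) : Prop :=
  S ⊆ L ∧ ∀ L' ∈ 𝓛, S ⊆ L' → L' = L

/-- least size of a finite positive teaching set for `L` w.r.t. `𝓛` (`⊤` if none exists). -/
noncomputable def TDpos (L : Set X) (𝓛 : Set (Set X)) : ℕ∞ :=
  sInf {n : ℕ∞ | ∃ S : Finset X, IsPosTeachingSet 𝓛 L ↑S ∧ n = S.card}

/-- A strict partial order (preference relation) on concepts:
`pr L' L` means `L` is strictly preferred over `L'`. -/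
def StrictPO (pr : Set X → Set X → Prop) : Prop :=
  (∀ A, ¬ pr A A) ∧ ∀ A B C : Set X, pr A B → pr B C → pr A C

/-- `PBTDord 𝓛 pr = sup_{L ∈ 𝓛} TD(L, 𝓛 \ {L' ∈ 𝓛 | pr L' L})`. -/
noncomputable def PBTDord (𝓛 : Set (Set X)) (pr : Set X → Set X → Prop) : ℕ∞ :=
  ⨆ L ∈ 𝓛, TD L {L' ∈ 𝓛 | ¬ pr L' L}

/-- preference-based teaching dimension of `𝓛`. -/
noncomputable def PBTD (𝓛 : Set (Set X)) : ℕ∞ :=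
  sInf {v : ℕ∞ | ∃ pr, StrictPO pr ∧ v = PBTDord 𝓛 pr}

/-- `PBTDposOrd 𝓛 pr = sup_{L ∈ 𝓛} TD⁺(L, 𝓛 \ {L' ∈ 𝓛 | pr L' L})`. -/
noncomputable def PBTDposOrd (𝓛 : Set (Set X)) (pr : Set X → Set X → Prop) : ℕ∞ :=
  ⨆ L ∈ 𝓛, TDpos L {L' ∈ 𝓛 | ¬ pr L' L}

/-- positive preference-based teaching dimension of `𝓛`. -/
noncomputable def PBTDpos (𝓛 : Set (Set X)) : ℕ∞ :=
  sInf {v : ℕ∞ | ∃ pr, StrictPO pr ∧ v = PBTDposOrd 𝓛 pr}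


theorem TD_mono {X : Type*} (L : Set X) {𝓐 𝓑 : Set (Set X)} (h : 𝓐 ⊆ 𝓑) :
    TD L 𝓐 ≤ TD L 𝓑 := by
  apply sInf_le_sInf
  rintro n ⟨T, ⟨hc, hu⟩, hn⟩
  exact ⟨T, ⟨hc, fun L' hL' hcon => hu L' (h hL') hcon⟩, hn⟩

theorem TDpos_mono {X : Type*} (L : Set X) {𝓐 𝓑 : Set (Set X)} (h : 𝓐 ⊆ 𝓑) :
    TDpos L 𝓐 ≤ TDpos L 𝓑 := by
  apply sInf_le_sInf
  rintro n ⟨S, ⟨hc, hu⟩, hn⟩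
  exact ⟨S, ⟨hc, fun L' hL' hcon => hu L' (h hL') hcon⟩, hn⟩

theorem PBTDord_mono {X : Type*} {𝓛 𝓛' : Set (Set X)} (h : 𝓛' ⊆ 𝓛)
    (pr : Set X → Set X → Prop) : PBTDord 𝓛' pr ≤ PBTDord 𝓛 pr := by
  refine iSup₂_le fun L hL => ?_
  refine le_trans (TD_mono L ?_) (le_iSup₂ (f := fun L _ => TD L {L' ∈ 𝓛 | ¬ pr L' L}) L (h hL))
  exact fun A hA => ⟨h hA.1, hA.2⟩

theorem PBTDposOrd_mono {X : Type*} {𝓛 𝓛' : Set (Set X)} (h : 𝓛' ⊆ 𝓛)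
    (pr : Set X → Set X → Prop) : PBTDposOrd 𝓛' pr ≤ PBTDposOrd 𝓛 pr := by
  refine iSup₂_le fun L hL => ?_
  refine le_trans (TDpos_mono L ?_)
    (le_iSup₂ (f := fun L _ => TDpos L {L' ∈ 𝓛 | ¬ pr L' L}) L (h hL))
  exact fun A hA => ⟨h hA.1, hA.2⟩

/-- Monotonicity of `PBTD` and `PBTD⁺`. -/
theorem pbtd_monotone {X : Type*} (𝓛 𝓛' : Set (Set X)) (h : 𝓛' ⊆ 𝓛) :
    PBTD 𝓛' ≤ PBTD 𝓛 ∧ PBTDpos 𝓛' ≤ PBTDpos 𝓛 := by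
  constructor
  · refine le_sInf ?_
    rintro v ⟨pr, hpr, rfl⟩
    exact le_trans (sInf_le ⟨pr, hpr, rfl⟩) (PBTDord_mono h pr)
  · refine le_sInf ?_
    rintro v ⟨pr, hpr, rfl⟩
    exact le_trans (sInf_le ⟨pr, hpr, rfl⟩) (PBTDposOrd_mono h pr)

end PBT
end

section
/- For every k ≥ 1, the class LINSET_k of linear subsets of ℕ₀ with at most k generators satisfies PBTD⁺(LINSET_k) = k and k − 1 ≤ PBTD(LINSET_k) ≤ k. -/
namespace PBT

variable {X : Type*}

/-- `⟨G⟩ = {Σ_{g ∈ G} a(g)·g : a(g) ∈ ℕ₀}`. -/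
def linSpan (G : Finset ℕ) : Set ℕ :=
  {n : ℕ | ∃ a : ℕ → ℕ, n = ∑ g ∈ G, a g * g}

/-- `LINSET_k`: non-empty linear subsets of `ℕ₀` with at most `k` (positive) generators. -/
def LINSET (k : ℕ) : Set (Set ℕ) :=
  {L | ∃ G : Finset ℕ, (∀ g ∈ G, 0 < g) ∧ 1 ≤ G.card ∧ G.card ≤ k ∧ L = linSpan G}

/-! ### Basic facts about `linSpan` -/

lemma zero_mem_linSpan (G : Finset ℕ) : 0 ∈ linSpan G := by
  refine ⟨fun _ => 0, by simp⟩

lemma mem_linSpan_self {G : Finset ℕ} {g : ℕ} (hg : g ∈ G) : g ∈ linSpan G := by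
  refine ⟨fun h => if h = g then 1 else 0, ?_⟩
  rw [Finset.sum_congr rfl (fun h _ => by rw [ite_mul, one_mul, zero_mul])]
  rw [Finset.sum_ite_eq' G g (fun h => h)]
  simp [hg]

lemma add_mem_linSpan {G : Finset ℕ} {x y : ℕ} (hx : x ∈ linSpan G) (hy : y ∈ linSpan G) :
    x + y ∈ linSpan G := by
  obtain ⟨a, rfl⟩ := hx
  obtain ⟨b, rfl⟩ := hy
  exact ⟨fun g => a g + b g, by rw [← Finset.sum_add_distrib]; congr 1; ext g; ring⟩

lemma linSpan_subset {G : Finset ℕ} {P : Set ℕ} (hP0 : 0 ∈ P)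
    (hPG : ∀ g ∈ G, g ∈ P) (hPadd : ∀ x ∈ P, ∀ y ∈ P, x + y ∈ P) :
    linSpan G ⊆ P := by
  rintro n ⟨a, rfl⟩
  refine Finset.sum_induction _ (· ∈ P) (fun x y hx hy => hPadd x hx y hy) hP0 ?_
  intro g hg
  induction a g with
  | zero => simpa using hP0
  | succ m ih =>
    have : (m + 1) * g = m * g + g := by ring
    rw [this]
    exact hPadd _ ih _ (hPG g hg)

lemma linSpan_le_linSpan {G G' : Finset ℕ} (h : ↑G ⊆ linSpan G') :
    linSpan G ⊆ linSpan G' :=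
  linSpan_subset (zero_mem_linSpan G') (fun g hg => h hg)
    (fun x hx y hy => add_mem_linSpan hx hy)

/-! ### The cube family -/

def SA (k : ℕ) (A : Finset ℕ) : Set ℕ :=
  {n | n = 0 ∨ n = k ∨ (∃ l ∈ A, n = k + l) ∨ 2 * k ≤ n}

def GA (k : ℕ) (A : Finset ℕ) : Finset ℕ :=
  insert k (A.image (k + ·) ∪ ((Finset.Icc 1 (k - 1)) \ A).image (2 * k + ·))

def Dset (k : ℕ) : Set ℕ := linSpan (Finset.Icc (k + 1) (2 * k))

lemma SA_ge {k : ℕ} {A : Finset ℕ} {n : ℕ} (hn : n ∈ SA k A) : n = 0 ∨ k ≤ n := by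
  rcases hn with h | h | ⟨l, _, h⟩ | h <;> omega

lemma SA_zero_mem {k : ℕ} {A : Finset ℕ} : 0 ∈ SA k A := Or.inl rfl

lemma SA_add {k : ℕ} {A : Finset ℕ} :
    ∀ x ∈ SA k A, ∀ y ∈ SA k A, x + y ∈ SA k A := by
  intro x hx y hy
  rcases SA_ge hx with rfl | hx'
  · simpa using hy
  rcases SA_ge hy with rfl | hy'
  · simpa using hx
  exact Or.inr (Or.inr (Or.inr (by omega)))

lemma GA_subset_SA {k : ℕ} {A : Finset ℕ} (hA : A ⊆ Finset.Icc 1 (k - 1)) :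
    ∀ g ∈ GA k A, g ∈ SA k A := by
  intro g hg
  rcases Finset.mem_insert.mp hg with rfl | hg
  · exact Or.inr (Or.inl rfl)
  rcases Finset.mem_union.mp hg with hg | hg
  · obtain ⟨l, hl, rfl⟩ := Finset.mem_image.mp hg
    exact Or.inr (Or.inr (Or.inl ⟨l, hl, rfl⟩))
  · obtain ⟨l, _, rfl⟩ := Finset.mem_image.mp hg
    exact Or.inr (Or.inr (Or.inr (by omega)))

lemma SA_subset_span {k : ℕ} {A : Finset ℕ} (hk : 1 ≤ k) (hA : A ⊆ Finset.Icc 1 (k - 1)) :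
    SA k A ⊆ linSpan (GA k A) := by
  have hkmem : k ∈ linSpan (GA k A) := mem_linSpan_self (Finset.mem_insert_self _ _)
  have hcube : ∀ l ∈ A, k + l ∈ linSpan (GA k A) := by
    intro l hl
    exact mem_linSpan_self (Finset.mem_insert_of_mem (Finset.mem_union_left _
      (Finset.mem_image_of_mem _ hl)))
  have main : ∀ n, 2 * k ≤ n → n ∈ linSpan (GA k A) := by
    intro n
    induction n using Nat.strong_induction_on with
    | _ n ih =>
      intro h2k
      by_cases h3 : 3 * k ≤ n
      · have h1 : n - k ∈ linSpan (GA k A) := ih (n - k) (by omega) (by omega)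
        have := add_mem_linSpan hkmem h1
        have he : k + (n - k) = n := by omega
        rwa [he] at this
      · set r := n - 2 * k with hr
        have hrk : r < k := by omega
        by_cases hr0 : r = 0
        · have he : n = k + k := by omega
          rw [he]; exact add_mem_linSpan hkmem hkmem
        by_cases hrA : r ∈ A
        · have he : n = k + (k + r) := by omega
          rw [he]; exact add_mem_linSpan hkmem (hcube r hrA)
        · have hmem : r ∈ (Finset.Icc 1 (k - 1)) \ A :=
            Finset.mem_sdiff.mpr ⟨Finset.mem_Icc.mpr ⟨by omega, by omega⟩, hrA⟩
          have he : n = 2 * k + r := by omega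
          rw [he]
          exact mem_linSpan_self (Finset.mem_insert_of_mem (Finset.mem_union_right _
            (Finset.mem_image_of_mem _ hmem)))
  rintro n (rfl | rfl | ⟨l, hl, rfl⟩ | h)
  · exact zero_mem_linSpan _
  · exact hkmem
  · exact hcube l hl
  · exact main n h

lemma span_GA {k : ℕ} {A : Finset ℕ} (hk : 1 ≤ k) (hA : A ⊆ Finset.Icc 1 (k - 1)) :
    linSpan (GA k A) = SA k A :=
  subset_antisymm (linSpan_subset SA_zero_mem (GA_subset_SA hA) SA_add) (SA_subset_span hk hA)

lemma GA_card {k : ℕ} {A : Finset ℕ} (hk : 1 ≤ k) (hA : A ⊆ Finset.Icc 1 (k - 1)) :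
    (GA k A).card ≤ k := by
  have h1 : (GA k A).card ≤ (A.image (k + ·) ∪ ((Finset.Icc 1 (k - 1)) \ A).image (2 * k + ·)).card + 1 :=
    Finset.card_insert_le _ _
  have h2 : (A.image (k + ·) ∪ ((Finset.Icc 1 (k - 1)) \ A).image (2 * k + ·)).card ≤
      (A.image (k + ·)).card + (((Finset.Icc 1 (k - 1)) \ A).image (2 * k + ·)).card :=
    Finset.card_union_le _ _
  have h3 : (A.image (k + ·)).card ≤ A.card := Finset.card_image_le
  have h4 : (((Finset.Icc 1 (k - 1)) \ A).image (2 * k + ·)).card ≤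
      ((Finset.Icc 1 (k - 1)) \ A).card := Finset.card_image_le
  have h5 : ((Finset.Icc 1 (k - 1)) \ A).card = (Finset.Icc 1 (k - 1)).card - A.card :=
    Finset.card_sdiff_of_subset hA
  have h6 : (Finset.Icc 1 (k - 1)).card = k - 1 := by
    rw [Nat.card_Icc]; omega
  have h7 : A.card ≤ k - 1 := h6 ▸ Finset.card_le_card hA
  omega

lemma SA_mem_LINSET {k : ℕ} {A : Finset ℕ} (hk : 1 ≤ k) (hA : A ⊆ Finset.Icc 1 (k - 1)) :
    SA k A ∈ LINSET k := by
  refine ⟨GA k A, ?_, ?_, GA_card hk hA, (span_GA hk hA).symm⟩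
  · intro g hg
    rcases Finset.mem_insert.mp hg with rfl | hg
    · omega
    rcases Finset.mem_union.mp hg with hg | hg <;>
      obtain ⟨l, _, rfl⟩ := Finset.mem_image.mp hg <;> omega
  · refine Finset.card_pos.mpr ⟨k, Finset.mem_insert_self _ _⟩

lemma Dset_mem_LINSET {k : ℕ} (hk : 1 ≤ k) : Dset k ∈ LINSET k := by
  refine ⟨Finset.Icc (k + 1) (2 * k), ?_, ?_, ?_, rfl⟩
  · intro g hg
    have := Finset.mem_Icc.mp hg
    omega
  · rw [Nat.card_Icc]; omega
  · rw [Nat.card_Icc]; omega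

lemma Dset_sub {k : ℕ} : Dset k ⊆ {n : ℕ | n = 0 ∨ k + 1 ≤ n} := by
  refine linSpan_subset (Or.inl rfl) ?_ ?_
  · intro g hg
    have := Finset.mem_Icc.mp hg
    exact Or.inr (by omega)
  · rintro x (rfl | hx) y hy
    · simpa using hy
    · rcases hy with rfl | hy <;> [exact Or.inr (by omega); exact Or.inr (by omega)]

lemma k_notMem_Dset {k : ℕ} (hk : 1 ≤ k) : k ∉ Dset k := by
  intro h
  have := Dset_sub h
  simp only [Set.mem_setOf_eq] at this
  omega

lemma k_mem_SA {k : ℕ} {A : Finset ℕ} : k ∈ SA k A := Or.inr (Or.inl rfl)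

lemma SA_ne_Dset {k : ℕ} (hk : 1 ≤ k) {A : Finset ℕ} : SA k A ≠ Dset k := by
  intro h
  exact k_notMem_Dset hk (h ▸ k_mem_SA)

lemma cube_mem_SA {k : ℕ} {A : Finset ℕ} (hA : A ⊆ Finset.Icc 1 (k - 1)) {l : ℕ}
    (hl : l ∈ Finset.Icc 1 (k - 1)) : (k + l ∈ SA k A) ↔ l ∈ A := by
  have hl' := Finset.mem_Icc.mp hl
  constructor
  · rintro (h | h | ⟨l', hl'', h⟩ | h)
    · omega
    · omega
    · have : l = l' := by omega
      rwa [this]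
    · exact (by omega : False).elim
  · intro h
    exact Or.inr (Or.inr (Or.inl ⟨l, h, rfl⟩))

/-! ### Flipping one coordinate of the cube -/

def flip (A : Finset ℕ) (l₀ : ℕ) : Finset ℕ :=
  if l₀ ∈ A then A.erase l₀ else insert l₀ A

lemma mem_flip_of_ne {A : Finset ℕ} {l₀ l : ℕ} (h : l ≠ l₀) :
    l ∈ flip A l₀ ↔ l ∈ A := by
  unfold flip
  split_ifs <;> simp [h]

lemma l0_mem_flip {A : Finset ℕ} {l₀ : ℕ} : l₀ ∈ flip A l₀ ↔ l₀ ∉ A := by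
  unfold flip
  split_ifs with h <;> simp [h]

lemma flip_subset {k : ℕ} {A : Finset ℕ} {l₀ : ℕ} (hA : A ⊆ Finset.Icc 1 (k - 1))
    (hl₀ : l₀ ∈ Finset.Icc 1 (k - 1)) : flip A l₀ ⊆ Finset.Icc 1 (k - 1) := by
  unfold flip
  split_ifs
  · exact (Finset.erase_subset _ _).trans hA
  · exact Finset.insert_subset hl₀ hA

lemma SA_flip_mem_iff {k : ℕ} {A : Finset ℕ} {l₀ p : ℕ} (hp : p ≠ k + l₀) :
    p ∈ SA k (flip A l₀) ↔ p ∈ SA k A := by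
  unfold SA
  simp only [Set.mem_setOf_eq]
  constructor <;> rintro (h | h | ⟨l, hl, rfl⟩ | h)
  · exact Or.inl h
  · exact Or.inr (Or.inl h)
  · have hne : l ≠ l₀ := fun he => hp (by rw [he])
    exact Or.inr (Or.inr (Or.inl ⟨l, (mem_flip_of_ne hne).mp hl, rfl⟩))
  · exact Or.inr (Or.inr (Or.inr h))
  · exact Or.inl h
  · exact Or.inr (Or.inl h)
  · have hne : l ≠ l₀ := fun he => hp (by rw [he])
    exact Or.inr (Or.inr (Or.inl ⟨l, (mem_flip_of_ne hne).mpr hl, rfl⟩))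
  · exact Or.inr (Or.inr (Or.inr h))

lemma SA_flip_ne {k : ℕ} {A : Finset ℕ} {l₀ : ℕ} (hA : A ⊆ Finset.Icc 1 (k - 1))
    (hl₀ : l₀ ∈ Finset.Icc 1 (k - 1)) : SA k (flip A l₀) ≠ SA k A := by
  intro h
  have h1 : (k + l₀ ∈ SA k (flip A l₀)) ↔ l₀ ∈ flip A l₀ := cube_mem_SA (flip_subset hA hl₀) hl₀
  have h2 : (k + l₀ ∈ SA k A) ↔ l₀ ∈ A := cube_mem_SA hA hl₀
  rw [h] at h1
  rw [h2] at h1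
  rw [l0_mem_flip] at h1
  tauto

/-! ### The finite families -/

def Fam (k : ℕ) : Set (Set ℕ) :=
  insert (Dset k) ((fun A => SA k A) '' {A : Finset ℕ | A ⊆ Finset.Icc 1 (k - 1)})

def Fam' (k : ℕ) : Set (Set ℕ) :=
  (fun A => SA k A) '' {A : Finset ℕ | A ⊆ Finset.Icc 1 (k - 1)}

lemma powerset_finite (k : ℕ) : {A : Finset ℕ | A ⊆ Finset.Icc 1 (k - 1)}.Finite := by
  refine Set.Finite.ofFinset (Finset.Icc 1 (k - 1)).powerset ?_
  simp [Finset.mem_powerset]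

lemma Fam'_finite (k : ℕ) : (Fam' k).Finite := (powerset_finite k).image _

lemma Fam_finite (k : ℕ) : (Fam k).Finite := (Fam'_finite k).insert _

lemma Fam_sub {k : ℕ} (hk : 1 ≤ k) : Fam k ⊆ LINSET k := by
  rintro L (rfl | ⟨A, hA, rfl⟩)
  · exact Dset_mem_LINSET hk
  · exact SA_mem_LINSET hk hA

lemma Fam'_sub {k : ℕ} (hk : 1 ≤ k) : Fam' k ⊆ LINSET k := by
  rintro L ⟨A, hA, rfl⟩
  exact SA_mem_LINSET hk hA

/-! ### Step lemmas -/

lemma step_pos {k : ℕ} (hk : 1 ≤ k) {L : Set ℕ} (hLF : L ∈ Fam k) {S : Finset ℕ}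
    (hS : ↑S ⊆ L) (hcard : S.card < k) :
    ∃ L' ∈ Fam k, L' ≠ L ∧ ↑S ⊆ L' := by
  rcases hLF with rfl | ⟨A, hA, rfl⟩
  · -- L = Dset k
    set A : Finset ℕ := (Finset.Icc 1 (k - 1)).filter (fun l => k + l ∈ S) with hAdef
    have hA : A ⊆ Finset.Icc 1 (k - 1) := Finset.filter_subset _ _
    refine ⟨SA k A, Or.inr ⟨A, hA, rfl⟩, SA_ne_Dset hk, ?_⟩
    intro s hs
    have hsD := Dset_sub (hS hs)
    simp only [Set.mem_setOf_eq] at hsD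
    rcases hsD with rfl | hs'
    · exact SA_zero_mem
    by_cases h2 : 2 * k ≤ s
    · exact Or.inr (Or.inr (Or.inr h2))
    · have hl : s - k ∈ A := by
        rw [hAdef, Finset.mem_filter, Finset.mem_Icc]
        have he : k + (s - k) = s := by omega
        rw [he]
        exact ⟨⟨by omega, by omega⟩, hs⟩
      exact Or.inr (Or.inr (Or.inl ⟨s - k, hl, by omega⟩))
  · -- L = SA k A
    by_cases hex : ∃ l₀ ∈ Finset.Icc 1 (k - 1), k + l₀ ∉ S
    · obtain ⟨l₀, hl₀, hl₀S⟩ := hex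
      refine ⟨SA k (flip A l₀), Or.inr ⟨flip A l₀, flip_subset hA hl₀, rfl⟩,
        SA_flip_ne hA hl₀, ?_⟩
      intro s hs
      have hne : s ≠ k + l₀ := by
        rintro rfl
        exact hl₀S hs
      exact (SA_flip_mem_iff hne).mpr (hS hs)
    · push_neg at hex
      set T : Finset ℕ := (Finset.Icc 1 (k - 1)).image (k + ·) with hTdef
      have hTS : T ⊆ S := by
        intro x hx
        obtain ⟨l, hl, rfl⟩ := Finset.mem_image.mp hx
        exact hex l hl
      have hTcard : T.card = k - 1 := by
        rw [hTdef, Finset.card_image_of_injective _ (add_right_injective k), Nat.card_Icc]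
        omega
      have hST : S = T := (Finset.eq_of_subset_of_card_le hTS (by omega)).symm
      refine ⟨Dset k, Or.inl rfl, Ne.symm (SA_ne_Dset hk), ?_⟩
      intro s hs
      rw [hST] at hs
      obtain ⟨l, hl, rfl⟩ := Finset.mem_image.mp hs
      have hl' := Finset.mem_Icc.mp hl
      exact mem_linSpan_self (Finset.mem_Icc.mpr ⟨by omega, by omega⟩)

lemma step_neg {k : ℕ} (hk : 2 ≤ k) {A : Finset ℕ} (hA : A ⊆ Finset.Icc 1 (k - 1))
    {T : Finset (ℕ × Bool)} (hcons : Consistent (SA k A) ↑T) (hcard : T.card < k - 1) :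
    ∃ A' : Finset ℕ, A' ⊆ Finset.Icc 1 (k - 1) ∧ SA k A' ≠ SA k A ∧
      Consistent (SA k A') ↑T := by
  set U : Finset ℕ := T.image Prod.fst with hUdef
  have hU : U.card < ((Finset.Icc 1 (k - 1)).image (k + ·)).card := by
    have h1 : U.card ≤ T.card := Finset.card_image_le
    have h2 : ((Finset.Icc 1 (k - 1)).image (k + ·)).card = k - 1 := by
      rw [Finset.card_image_of_injective _ (add_right_injective k), Nat.card_Icc]; omega
    omega
  have hex : ∃ x ∈ (Finset.Icc 1 (k - 1)).image (k + ·), x ∉ U := by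
    by_contra hcon
    push_neg at hcon
    exact absurd (Finset.card_le_card hcon) (not_le.mpr hU)
  obtain ⟨x, hx, hxU⟩ := hex
  obtain ⟨l₀, hl₀, rfl⟩ := Finset.mem_image.mp hx
  refine ⟨flip A l₀, flip_subset hA hl₀, SA_flip_ne hA hl₀, ?_⟩
  intro p hp
  have hpne : p.1 ≠ k + l₀ := by
    intro h
    exact hxU (Finset.mem_image.mpr ⟨p, hp, h⟩)
  have := hcons p hp
  rw [← SA_flip_mem_iff (A := A) (l₀ := l₀) hpne] at this
  exact this

/-! ### Generic cycle contradiction -/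

lemma no_cycle {pr : Set ℕ → Set ℕ → Prop} (hpr : StrictPO pr) {F : Set (Set ℕ)}
    (hfin : F.Finite) (hne : F.Nonempty)
    (key : ∀ L ∈ F, ∃ L' ∈ F, L' ≠ L ∧ pr L' L) : False := by
  classical
  have hstep : ∀ L : Set ℕ, ∃ L', L ∈ F → (L' ∈ F ∧ pr L' L) := by
    intro L
    by_cases hL : L ∈ F
    · obtain ⟨L', hL'F, _, hprL⟩ := key L hL
      exact ⟨L', fun _ => ⟨hL'F, hprL⟩⟩
    · exact ⟨∅, fun h => absurd h hL⟩
  choose f hf using hstep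
  obtain ⟨L₀, hL₀⟩ := hne
  set seq : ℕ → Set ℕ := fun n => f^[n] L₀ with hseq
  have hmem : ∀ n, seq n ∈ F := by
    intro n
    induction n with
    | zero => exact hL₀
    | succ n ih =>
      have : seq (n + 1) = f (seq n) := Function.iterate_succ_apply' f n L₀
      rw [this]
      exact (hf (seq n) ih).1
  have hsucc : ∀ n, pr (seq (n + 1)) (seq n) := by
    intro n
    have : seq (n + 1) = f (seq n) := Function.iterate_succ_apply' f n L₀
    rw [this]
    exact (hf (seq n) (hmem n)).2
  have hchain : ∀ m n, m < n → pr (seq n) (seq m) := by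
    intro m n
    induction n with
    | zero => omega
    | succ n ih =>
      intro hmn
      rcases Nat.lt_succ_iff_lt_or_eq.mp hmn with h | rfl
      · exact hpr.2 _ _ _ (hsucc n) (ih h)
      · exact hsucc m
  obtain ⟨a, -, b, -, hab, heq⟩ :=
    Set.infinite_univ.exists_ne_map_eq_of_mapsTo (f := seq) (fun n _ => hmem n) hfin
  rcases hab.lt_or_gt with h | h
  · exact hpr.1 _ (heq ▸ hchain a b h)
  · exact hpr.1 _ (heq.symm ▸ hchain b a h)

/-! ### Extraction lemmas -/

lemma exists_pos_ts {L : Set ℕ} {𝓛' : Set (Set ℕ)} {c : ℕ∞} (h : TDpos L 𝓛' < c) :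
    ∃ S : Finset ℕ, IsPosTeachingSet 𝓛' L ↑S ∧ (S.card : ℕ∞) < c := by
  obtain ⟨n, ⟨S, hS, rfl⟩, hn⟩ := sInf_lt_iff.mp h
  exact ⟨S, hS, hn⟩

lemma exists_ts {L : Set ℕ} {𝓛' : Set (Set ℕ)} {c : ℕ∞} (h : TD L 𝓛' < c) :
    ∃ T : Finset (ℕ × Bool), IsTeachingSet 𝓛' L ↑T ∧ (T.card : ℕ∞) < c := by
  obtain ⟨n, ⟨T, hT, rfl⟩, hn⟩ := sInf_lt_iff.mp h
  exact ⟨T, hT, hn⟩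

/-! ### Lower bounds -/

lemma pos_lower {k : ℕ} (hk : 1 ≤ k) {pr : Set ℕ → Set ℕ → Prop} (hpr : StrictPO pr) :
    (k : ℕ∞) ≤ PBTDposOrd (LINSET k) pr := by
  by_contra hcon
  rw [not_le] at hcon
  have key : ∀ L ∈ Fam k, ∃ L' ∈ Fam k, L' ≠ L ∧ pr L' L := by
    intro L hLF
    have hL𝓛 : L ∈ LINSET k := Fam_sub hk hLF
    have h1 : TDpos L {L' ∈ LINSET k | ¬ pr L' L} < (k : ℕ∞) :=
      lt_of_le_of_lt (le_iSup₂ (f := fun L _ => TDpos L {L' ∈ LINSET k | ¬ pr L' L}) L hL𝓛) hcon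
    obtain ⟨S, ⟨hSsub, huniq⟩, hSc⟩ := exists_pos_ts h1
    have hSk : S.card < k := by exact_mod_cast hSc
    obtain ⟨L', hL'F, hne, hSL'⟩ := step_pos hk hLF hSsub hSk
    refine ⟨L', hL'F, hne, ?_⟩
    by_contra hnp
    exact hne (huniq L' ⟨Fam_sub hk hL'F, hnp⟩ hSL')
  exact no_cycle hpr (Fam_finite k) ⟨Dset k, Or.inl rfl⟩ key

lemma neg_lower {k : ℕ} (hk : 2 ≤ k) {pr : Set ℕ → Set ℕ → Prop} (hpr : StrictPO pr) :
    ((k - 1 : ℕ) : ℕ∞) ≤ PBTDord (LINSET k) pr := by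
  by_contra hcon
  rw [not_le] at hcon
  have key : ∀ L ∈ Fam' k, ∃ L' ∈ Fam' k, L' ≠ L ∧ pr L' L := by
    rintro L hLF
    obtain ⟨A, hA, rfl⟩ := hLF
    have hL𝓛 : SA k A ∈ LINSET k := SA_mem_LINSET (by omega) hA
    have h1 : TD (SA k A) {L' ∈ LINSET k | ¬ pr L' (SA k A)} < ((k - 1 : ℕ) : ℕ∞) :=
      lt_of_le_of_lt (le_iSup₂ (f := fun L _ => TD L {L' ∈ LINSET k | ¬ pr L' L}) _ hL𝓛) hcon
    obtain ⟨T, ⟨hcons, huniq⟩, hTc⟩ := exists_ts h1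
    have hTk : T.card < k - 1 := by exact_mod_cast hTc
    obtain ⟨A', hA', hne, hcons'⟩ := step_neg hk hA hcons hTk
    refine ⟨SA k A', ⟨A', hA', rfl⟩, hne, ?_⟩
    by_contra hnp
    exact hne (huniq (SA k A') ⟨SA_mem_LINSET (by omega) hA', hnp⟩ hcons')
  refine no_cycle hpr (Fam'_finite k) ⟨SA k ∅, ⟨∅, by simp, rfl⟩⟩ key

/-! ### Upper bounds -/

def prSup : Set ℕ → Set ℕ → Prop := fun A B => B ⊂ A

lemma prSup_strict : StrictPO (X := ℕ) prSup := by
  constructor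
  · intro A h
    exact ssubset_irrefl A h
  · intro A B C h1 h2
    exact h2.trans h1

lemma posord_upper {k : ℕ} : PBTDposOrd (LINSET k) prSup ≤ (k : ℕ∞) := by
  refine iSup₂_le ?_
  rintro L ⟨G, hGpos, hG1, hGk, rfl⟩
  have hTS : IsPosTeachingSet {L' ∈ LINSET k | ¬ prSup L' (linSpan G)} (linSpan G) ↑G := by
    constructor
    · intro g hg
      exact mem_linSpan_self hg
    · rintro L' ⟨hL'𝓛, hnp⟩ hGL'
      obtain ⟨G', _, _, _, rfl⟩ := hL'𝓛
      have hsub : linSpan G ⊆ linSpan G' := linSpan_le_linSpan hGL'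
      by_contra hne
      exact hnp (ssubset_of_subset_of_ne hsub (Ne.symm hne))
  calc TDpos (linSpan G) {L' ∈ LINSET k | ¬ prSup L' (linSpan G)} ≤ (G.card : ℕ∞) :=
        sInf_le ⟨G, hTS, rfl⟩
    _ ≤ (k : ℕ∞) := by exact_mod_cast hGk

lemma ord_upper {k : ℕ} : PBTDord (LINSET k) prSup ≤ (k : ℕ∞) := by
  refine iSup₂_le ?_
  rintro L ⟨G, hGpos, hG1, hGk, rfl⟩
  set T : Finset (ℕ × Bool) := G.image (fun g => (g, true)) with hTdef
  have hTS : IsTeachingSet {L' ∈ LINSET k | ¬ prSup L' (linSpan G)} (linSpan G) ↑T := by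
    constructor
    · intro p hp
      obtain ⟨g, hg, rfl⟩ := Finset.mem_image.mp hp
      exact ⟨fun _ => mem_linSpan_self hg, fun h => by simp at h⟩
    · rintro L' ⟨hL'𝓛, hnp⟩ hcons
      obtain ⟨G', _, _, _, rfl⟩ := hL'𝓛
      have hGL' : ↑G ⊆ linSpan G' := by
        intro g hg
        exact (hcons (g, true) (Finset.mem_coe.mpr
          (Finset.mem_image_of_mem _ (Finset.mem_coe.mp hg)))).1 rfl
      have hsub : linSpan G ⊆ linSpan G' := linSpan_le_linSpan hGL'
      by_contra hne
      exact hnp (ssubset_of_subset_of_ne hsub (Ne.symm hne))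
  calc TD (linSpan G) {L' ∈ LINSET k | ¬ prSup L' (linSpan G)} ≤ (T.card : ℕ∞) :=
        sInf_le ⟨T, hTS, rfl⟩
    _ ≤ (k : ℕ∞) := by
        have : T.card ≤ k := le_trans Finset.card_image_le hGk
        exact_mod_cast this

/-- `PBTD⁺(LINSET_k) = k` and `k − 1 ≤ PBTD(LINSET_k) ≤ k`. -/
theorem pbtd_linset (k : ℕ) (hk : 1 ≤ k) :
    PBTDpos (LINSET k) = (k : ℕ∞) ∧
    ((k - 1 : ℕ) : ℕ∞) ≤ PBTD (LINSET k) ∧ PBTD (LINSET k) ≤ (k : ℕ∞) := by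
  refine ⟨le_antisymm ?_ ?_, ?_, ?_⟩
  · exact le_trans (sInf_le ⟨prSup, prSup_strict, rfl⟩) posord_upper
  · refine le_sInf ?_
    rintro v ⟨pr, hpr, rfl⟩
    exact pos_lower hk hpr
  · by_cases hk2 : 2 ≤ k
    · refine le_sInf ?_
      rintro v ⟨pr, hpr, rfl⟩
      exact neg_lower hk2 hpr
    · have hk1 : k = 1 := by omega
      subst hk1
      simp
  · exact le_trans (sInf_le ⟨prSup, prSup_strict, rfl⟩) ord_upper

end PBT
end
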